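/- Let d ≥ 1 be an integer and let G be a finite simple graph with at least one edge, no isolated vertices, and maximum degree Δ(G) ≤ d. Then tw(G) ≤ 2·cc(G) + 1 and cc(G) ≤ d·(tw(G) + 1) − 1. -/

import Mathlib

open SimpleGraph
set_option linter.unusedSectionVars false
set_option maxHeartbeats 1000000



/-- A tree decomposition of a finite simple graph `G`. -/
structure TreeDecomp {V : Type} [Fintype V] (G : SimpleGraph V) : Type 1 where
  ι : Type
  instFin : Fintype ι
  T : SimpleGraph ι
  isTree : T.IsTree
  bag : ι → Finset V
  bag_cover : ∀ v : V, ∃ t : ι, v ∈ bag t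
  bag_edge : ∀ u v : V, G.Adj u v → ∃ t : ι, u ∈ bag t ∧ v ∈ bag t
  bag_conn : ∀ v : V, (T.induce {t : ι | v ∈ bag t}).Connected

/-- The width of a tree decomposition: `max_t |B_t| - 1`. -/
noncomputable def TreeDecomp.width {V : Type} [Fintype V] {G : SimpleGraph V}
    (D : TreeDecomp G) : ℕ :=
  (@Finset.univ D.ι D.instFin).sup (fun t => (D.bag t).card) - 1

/-- The treewidth of a finite simple graph. -/
noncomputable def treewidth {V : Type} [Fintype V] (G : SimpleGraph V) : ℕ :=
  sInf {n : ℕ | ∃ D : TreeDecomp G, D.width = n}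


/-- The degree of the merged vertex created when, after the edges in `done` (which ends with
the edge `e` just contracted) have been contracted, we count the edges of `G` not yet
contracted having at least one endpoint in the connected component (of the spanning subgraph
with edge set `done`) containing the endpoints of `e`. -/
noncomputable def mergedDeg {V : Type} (G : SimpleGraph V) (done : List (Sym2 V))
    (e : Sym2 V) : ℕ :=
  Set.ncard {f : Sym2 V | f ∈ G.edgeSet ∧ f ∉ done ∧
    ∃ x ∈ f, ∃ y ∈ e, (SimpleGraph.fromEdgeSet {g : Sym2 V | g ∈ done}).Reachable x y}

/-- The complexity of a contraction ordering, given as a list of edges: the maximum over all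
steps `i` of the degree of the vertex obtained by contracting the `i`-th edge. -/
noncomputable def listComplexity {V : Type} (G : SimpleGraph V) (l : List (Sym2 V)) : ℕ :=
  Finset.univ.sup (fun i : Fin l.length => mergedDeg G (l.take (i + 1)) (l.get i))

/-- `l` is an ordering of the edge set of `G`. -/
def IsEdgeOrder {V : Type} (G : SimpleGraph V) (l : List (Sym2 V)) : Prop :=
  l.Nodup ∧ ∀ e : Sym2 V, e ∈ l ↔ e ∈ G.edgeSet

/-- The contraction complexity of `G`: the minimum complexity of a contraction ordering. -/
noncomputable def cc {V : Type} (G : SimpleGraph V) : ℕ :=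
  sInf {n : ℕ | ∃ l : List (Sym2 V), IsEdgeOrder G l ∧ listComplexity G l = n}

section TreeLemmas

variable {ι : Type} {T : SimpleGraph ι} [DecidableEq ι]

/-- The unique path between two vertices of a tree. -/
noncomputable def tpath (hT : T.IsTree) (u v : ι) : T.Walk u v :=
  (hT.existsUnique_path u v).choose

lemma tpath_isPath (hT : T.IsTree) (u v : ι) : (tpath hT u v).IsPath :=
  (hT.existsUnique_path u v).choose_spec.1

lemma tpath_unique (hT : T.IsTree) {u v : ι} (p : T.Walk u v) (hp : p.IsPath) :
    p = tpath hT u v :=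
  (hT.existsUnique_path u v).choose_spec.2 p hp

lemma tpath_subset_walk (hT : T.IsTree) {u v : ι} (w : T.Walk u v) :
    (tpath hT u v).support ⊆ w.support := by
  rw [← tpath_unique hT w.bypass w.bypass_isPath]
  exact w.support_bypass_subset

lemma length_tpath (hT : T.IsTree) (u v : ι) : (tpath hT u v).length = T.dist u v := by
  obtain ⟨p, hp, hlen⟩ := (hT.isConnected u v).exists_path_of_dist
  rw [tpath_unique hT p hp] at hlen
  exact hlen

lemma dist_add_of_mem_tpath (hT : T.IsTree) {u v w : ι}
    (h : w ∈ (tpath hT u v).support) : T.dist u w + T.dist w v = T.dist u v := by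
  have h1 : ((tpath hT u v).takeUntil w h).IsPath := (tpath_isPath hT u v).takeUntil h
  have h2 : ((tpath hT u v).dropUntil w h).IsPath := (tpath_isPath hT u v).dropUntil h
  have hspec := (tpath hT u v).take_spec h
  have hlen : ((tpath hT u v).takeUntil w h).length + ((tpath hT u v).dropUntil w h).length
      = (tpath hT u v).length := by
    conv_rhs => rw [← hspec]
    rw [SimpleGraph.Walk.length_append]
  rw [tpath_unique hT _ h1, tpath_unique hT _ h2] at hlen
  rw [length_tpath, length_tpath, length_tpath] at hlen
  exact hlen

lemma isPath_concat {u v w : ι} {p : T.Walk u v} (hp : p.IsPath) (h : T.Adj v w)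
    (hw : w ∉ p.support) : (p.concat h).IsPath := by
  rw [← SimpleGraph.Walk.isPath_reverse_iff, SimpleGraph.Walk.reverse_concat]
  rw [SimpleGraph.Walk.cons_isPath_iff]
  refine ⟨hp.reverse, ?_⟩
  rwa [SimpleGraph.Walk.support_reverse, List.mem_reverse]

lemma dist_adj_ne (hT : T.IsTree) (r : ι) {a b : ι} (hab : T.Adj a b) :
    T.dist r a ≠ T.dist r b := by
  intro heq
  have hb : b ∉ (tpath hT r a).support := by
    intro hb
    have := dist_add_of_mem_tpath hT hb
    have hba : T.dist b a ≠ 0 := (hT.isConnected b a).pos_dist_of_ne hab.ne'  |>.ne'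
    omega
  have hpath : ((tpath hT r a).concat hab).IsPath :=
    isPath_concat (tpath_isPath hT r a) hab hb
  have := tpath_unique hT _ hpath
  have hlen : ((tpath hT r a).concat hab).length = T.dist r b := by
    rw [this, length_tpath]
  rw [SimpleGraph.Walk.length_concat, length_tpath] at hlen
  omega

lemma dist_adj_le (hT : T.IsTree) (r : ι) {a b : ι} (hab : T.Adj a b) :
    T.dist r b ≤ T.dist r a + 1 := by
  have h1 : T.dist a b ≤ 1 := by
    have := SimpleGraph.dist_le (SimpleGraph.Walk.cons hab SimpleGraph.Walk.nil)
    simpa using this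
  calc T.dist r b ≤ T.dist r a + T.dist a b := (hT.isConnected).dist_triangle
    _ ≤ T.dist r a + 1 := by omega

lemma dist_adj_cases (hT : T.IsTree) (r : ι) {a b : ι} (hab : T.Adj a b) :
    T.dist r b = T.dist r a + 1 ∨ T.dist r a = T.dist r b + 1 := by
  have h1 := dist_adj_le hT r hab
  have h2 := dist_adj_le hT r hab.symm
  have h3 := dist_adj_ne hT r hab
  omega


/-- `z` is a descendant of `t₀` w.r.t. root `r`: `t₀` lies on the path from `r` to `z`. -/
def Desc (hT : T.IsTree) (r t₀ z : ι) : Prop := t₀ ∈ (tpath hT r z).support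

lemma desc_self (hT : T.IsTree) (r t₀ : ι) : Desc hT r t₀ t₀ :=
  SimpleGraph.Walk.end_mem_support _

lemma desc_step (hT : T.IsTree) {r t₀ z z' : ι} (hz : Desc hT r t₀ z)
    (hadj : T.Adj z z') (hd : T.dist r t₀ ≤ T.dist r z') : Desc hT r t₀ z' := by
  classical
  have hw : (tpath hT r z).support ⊆
      ((tpath hT r z').append (SimpleGraph.Walk.cons hadj.symm SimpleGraph.Walk.nil)).support :=
    tpath_subset_walk hT _
  have := hw hz
  rw [SimpleGraph.Walk.mem_support_append_iff] at this
  rcases this with h | h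
  · exact h
  · -- t₀ ∈ support of the single edge walk z' :: z; so t₀ = z' or t₀ = z
    simp [SimpleGraph.Walk.support_cons] at h
    rcases h with h | h
    · rw [h]; exact SimpleGraph.Walk.end_mem_support _
    · -- t₀ = z
      subst h
      -- dist r z' = dist r z + 1
      have hcase := dist_adj_cases hT r hadj
      have hdz : T.dist r z' = T.dist r t₀ + 1 := by
        unfold Desc at hz
        omega
      have hz'notin : z' ∉ (tpath hT r t₀).support := by
        intro hmem
        have := dist_add_of_mem_tpath hT hmem
        have h1 : T.dist z' t₀ ≤ 1 := by
          have := SimpleGraph.dist_le (SimpleGraph.Walk.cons hadj.symm SimpleGraph.Walk.nil)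
          simpa using this
        omega
      have hpath : ((tpath hT r t₀).concat hadj).IsPath :=
        isPath_concat (tpath_isPath hT r t₀) hadj hz'notin
      have hun := tpath_unique hT _ hpath
      unfold Desc
      rw [← hun, SimpleGraph.Walk.support_concat]
      simp

lemma desc_min_path (hT : T.IsTree) {r t₀ s u : ι} (hs : Desc hT r t₀ s)
    (hu : T.dist r u ≤ T.dist r t₀) : t₀ ∈ (tpath hT u s).support := by
  have hw : (tpath hT r s).support ⊆
      ((tpath hT r u).append (tpath hT u s)).support := tpath_subset_walk hT _
  have := hw hs
  rw [SimpleGraph.Walk.mem_support_append_iff] at this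
  rcases this with h | h
  · have hsplit := dist_add_of_mem_tpath hT h
    have : t₀ = u := by
      by_contra hne
      have := (hT.isConnected t₀ u).pos_dist_of_ne hne
      omega
    rw [this]
    exact SimpleGraph.Walk.start_mem_support _
  · exact h

lemma connected_set_tpath_subset (hT : T.IsTree) {S : Set ι}
    (hS : (T.induce S).Connected) {a b : ι} (ha : a ∈ S) (hb : b ∈ S) :
    ∀ x ∈ (tpath hT a b).support, x ∈ S := by
  obtain ⟨w'⟩ := hS.preconnected ⟨a, ha⟩ ⟨b, hb⟩
  let F : T.induce S →g T := ⟨Subtype.val, fun {x y} h => h⟩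
  have hw : ∀ x ∈ (w'.map F).support, x ∈ S := by
    intro x hx
    rw [SimpleGraph.Walk.support_map, List.mem_map] at hx
    obtain ⟨⟨y, hy⟩, _, rfl⟩ := hx
    exact hy
  intro x hx
  exact hw x (tpath_subset_walk hT (w'.map F) hx)

lemma desc_spread (hT : T.IsTree) {r t₀ : ι} {S : Set ι}
    (hS : (T.induce S).Connected) (hdeep : ∀ u ∈ S, T.dist r t₀ ≤ T.dist r u)
    {s₀ : ι} (hs₀ : s₀ ∈ S) (h0 : Desc hT r t₀ s₀) : ∀ s ∈ S, Desc hT r t₀ s := by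
  intro s hs
  obtain ⟨w'⟩ := hS.preconnected ⟨s₀, hs₀⟩ ⟨s, hs⟩
  have key : ∀ (x y : S) (w : (T.induce S).Walk x y), Desc hT r t₀ x.1 → Desc hT r t₀ y.1 := by
    intro x y w
    induction w with
    | nil => exact id
    | cons h p ih =>
      rename_i a b c
      intro hx
      exact ih (desc_step hT hx h (hdeep _ b.2))
  exact key _ _ w' h0

end TreeLemmas


lemma rank_add_lt {M A B u v : ℕ} (hu : u < M) (hAB : A < B) :
    A * M + u < B * M + v := by
  have h1 : A * M + u < (A + 1) * M := by
    rw [add_one_mul]; omega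
  have h2 : (A + 1) * M ≤ B * M := Nat.mul_le_mul_right M hAB
  omega

lemma rank_le_of_le {M A B u v : ℕ} (hv : v < M) (h : A * M + u ≤ B * M + v) : A ≤ B := by
  by_contra hc
  have := rank_add_lt (u := v) (v := u) hv (by omega : B < A)
  omega

example {V : Type} [Fintype V] [DecidableEq V] (rkV : V → ℕ)
    (hinj : Function.Injective rkV) : True := by
  letI : LinearOrder V := LinearOrder.lift' rkV hinj
  have hle : ∀ a b : V, a ≤ b ↔ rkV a ≤ rkV b := fun a b => Iff.rfl
  have hlt : ∀ a b : V, a < b ↔ rkV a < rkV b := by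
    intro a b
    rw [lt_iff_le_not_ge, hle, hle, lt_iff_le_not_ge]
  -- maxEnd
  let maxEnd : Sym2 V → V := Sym2.lift ⟨fun a b => max a b, fun a b => max_comm a b⟩
  have hmE : ∀ a b : V, maxEnd s(a,b) = max a b := fun a b => rfl
  have hmem : ∀ f : Sym2 V, maxEnd f ∈ f := by
    intro f
    induction f with
    | _ a b => rw [hmE]; rcases max_choice a b with h | h <;> rw [h] <;> simp
  have hbound : ∀ (f : Sym2 V) (z : V), z ∈ f → z ≤ maxEnd f := by
    intro f z hz
    induction f with
    | _ a b =>
      rw [hmE]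
      rcases Sym2.mem_iff.1 hz with h | h <;> subst h
      · exact le_max_left _ _
      · exact le_max_right _ _
  trivial

section Dir2
variable {V : Type} [Fintype V] [DecidableEq V] {G : SimpleGraph V}
variable {ι : Type} [DecidableEq ι] {T : SimpleGraph ι} (hT : T.IsTree)
variable (bag : ι → Finset V) (r : ι) (top : V → ι)

lemma dir2_main
    (hconn : ∀ v : V, (T.induce {t | v ∈ bag t}).Connected)
    (hedge : ∀ u v : V, G.Adj u v → ∃ t, u ∈ bag t ∧ v ∈ bag t)
    (htop1 : ∀ v, v ∈ bag (top v))
    (htop2 : ∀ v t, v ∈ bag t → T.dist r (top v) ≤ T.dist r t)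
    (P : Set V) (v0 : V)
    (hmin : ∀ z ∈ P, T.dist r (top v0) ≤ T.dist r (top z))
    (H : SimpleGraph V) (hH : ∀ a b : V, H.Adj a b → G.Adj a b ∧ a ∈ P ∧ b ∈ P)
    {x : V} (hx : H.Reachable v0 x) :
    ∀ s, x ∈ bag s → Desc hT r (top v0) s := by
  have base : ∀ s, v0 ∈ bag s → Desc hT r (top v0) s := by
    intro s hs
    exact desc_spread hT (hconn v0) (fun u hu => htop2 v0 u hu) (htop1 v0)
      (desc_self hT r (top v0)) s hs
  have step : ∀ (a b : V) (w : H.Walk a b),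
      (∀ s, a ∈ bag s → Desc hT r (top v0) s) → (∀ s, b ∈ bag s → Desc hT r (top v0) s) := by
    intro a b w
    induction w with
    | nil => exact id
    | cons h p ih =>
      rename_i u c _
      intro ha
      apply ih
      obtain ⟨hadj, _, hcP⟩ := hH _ _ h
      obtain ⟨s', hus', hcs'⟩ := hedge _ _ hadj
      intro s hs
      refine desc_spread hT (hconn c) ?_ hcs' (ha s' hus') s hs
      intro u hu
      exact le_trans (hmin c hcP) (htop2 c u hu)
  obtain ⟨w⟩ := hx
  exact step v0 x w base

include hT in
lemma dir2_boundary
    (hconn : ∀ v : V, (T.induce {t | v ∈ bag t}).Connected)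
    (hedge : ∀ u v : V, G.Adj u v → ∃ t, u ∈ bag t ∧ v ∈ bag t)
    (htop1 : ∀ v, v ∈ bag (top v))
    (htop2 : ∀ v t, v ∈ bag t → T.dist r (top v) ≤ T.dist r t)
    (P : Set V) (v0 : V)
    (hmin : ∀ z ∈ P, T.dist r (top v0) ≤ T.dist r (top z))
    (H : SimpleGraph V) (hH : ∀ a b : V, H.Adj a b → G.Adj a b ∧ a ∈ P ∧ b ∈ P)
    {x y : V} (hx : H.Reachable v0 x) (hxy : G.Adj x y)
    (hyk : T.dist r (top y) ≤ T.dist r (top v0)) : y ∈ bag (top v0) := by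
  obtain ⟨s', hxs', hys'⟩ := hedge _ _ hxy
  have hdesc : Desc hT r (top v0) s' :=
    dir2_main hT bag r top hconn hedge htop1 htop2 P v0 hmin H hH hx s' hxs'
  have hmem : top v0 ∈ (tpath hT (top y) s').support :=
    desc_min_path hT hdesc hyk
  have := connected_set_tpath_subset hT (hconn y) (htop1 y) hys' _ hmem
  exact this

end Dir2

lemma dir2_final {V : Type} [Fintype V] [DecidableEq V] (G : SimpleGraph V) [DecidableRel G.Adj]
    (d c : ℕ) (hdeg : ∀ v : V, G.degree v ≤ d) (D : TreeDecomp G)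
    (hc : ∀ t, (D.bag t).card ≤ c) :
    ∃ l : List (Sym2 V), IsEdgeOrder G l ∧ listComplexity G l ≤ d * c - 1 := by
  classical
  haveI := D.instFin
  haveI : DecidableEq D.ι := Classical.decEq _
  have hT := D.isTree
  have hι : Nonempty D.ι := hT.isConnected.nonempty
  obtain ⟨r⟩ := hι
  have htopex : ∀ v : V, ∃ t, v ∈ D.bag t ∧
      ∀ t', v ∈ D.bag t' → D.T.dist r t ≤ D.T.dist r t' := by
    intro v
    obtain ⟨t0, ht0⟩ := D.bag_cover v
    obtain ⟨t, ht, hmin⟩ := Finset.exists_min_image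
      (Finset.univ.filter (fun t => v ∈ D.bag t)) (fun t => D.T.dist r t)
      ⟨t0, by simp [ht0]⟩
    exact ⟨t, (Finset.mem_filter.1 ht).2, fun t' ht' => hmin t' (by simp [ht'])⟩
  choose top htop1 htop2 using htopex
  set key : V → ℕ := fun v => D.T.dist r (top v) with hkeydef
  set K := Finset.univ.sup key with hKdef
  have hKb : ∀ v, key v ≤ K := fun v => Finset.le_sup (Finset.mem_univ v)
  set n := Fintype.card V with hndef
  set eV := Fintype.equivFin V with heVdef
  set rkV : V → ℕ := fun v => (K - key v) * n + (eV v) with hrkVdef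
  have hinjV : Function.Injective rkV := by
    intro a b h
    have h1 : K - key a ≤ K - key b := rank_le_of_le (eV b).isLt h.le
    have h2 : K - key b ≤ K - key a := rank_le_of_le (eV a).isLt h.ge
    have h3 : K - key a = K - key b := le_antisymm h1 h2
    have h4 : ((eV a : ℕ)) = (eV b : ℕ) := by
      simp only [hrkVdef, h3] at h
      omega
    exact eV.injective (Fin.ext h4)
  have hrk_key : ∀ a b : V, rkV a ≤ rkV b → key b ≤ key a := by
    intro a b h
    have h1 : K - key a ≤ K - key b := rank_le_of_le (eV b).isLt h
    have := hKb a; have := hKb b; omega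
  letI : LinearOrder V := LinearOrder.lift' rkV hinjV
  have hleV : ∀ a b : V, a ≤ b ↔ rkV a ≤ rkV b := fun _ _ => Iff.rfl
  have hltV : ∀ a b : V, a < b ↔ rkV a < rkV b := by
    intro a b
    rw [lt_iff_le_not_ge, hleV, hleV, lt_iff_le_not_ge]
  set maxEnd : Sym2 V → V := Sym2.lift ⟨fun a b => max a b, fun a b => max_comm a b⟩
    with hmEdef
  have hmem : ∀ f : Sym2 V, maxEnd f ∈ f := by
    intro f
    induction f with
    | _ a b =>
      show max a b ∈ _
      rcases max_choice a b with h | h <;> rw [h] <;> simp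
  have hbound : ∀ (f : Sym2 V) (z : V), z ∈ f → z ≤ maxEnd f := by
    intro f z hz
    induction f with
    | _ a b =>
      show z ≤ max a b
      rcases Sym2.mem_iff.1 hz with h | h <;> subst h
      · exact le_max_left _ _
      · exact le_max_right _ _
  set M := Fintype.card (Sym2 V) with hMdef
  set eE := Fintype.equivFin (Sym2 V) with heEdef
  set rkE : Sym2 V → ℕ := fun f => rkV (maxEnd f) * M + eE f with hrkEdef
  have hinjE : Function.Injective rkE := by
    intro f g h
    have h1 := rank_le_of_le (eE g).isLt h.le
    have h2 := rank_le_of_le (eE f).isLt h.ge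
    have h3 : rkV (maxEnd f) = rkV (maxEnd g) := le_antisymm h1 h2
    have h4 : ((eE f : ℕ)) = (eE g : ℕ) := by
      simp only [hrkEdef, h3] at h
      omega
    exact eE.injective (Fin.ext h4)
  letI : LinearOrder (Sym2 V) := LinearOrder.lift' rkE hinjE
  letI : PartialOrder (Sym2 V) := LinearOrder.toPartialOrder
  have hleE : ∀ f g : Sym2 V, f ≤ g ↔ rkE f ≤ rkE g := fun _ _ => Iff.rfl
  have hltE : ∀ f g : Sym2 V, f < g ↔ rkE f < rkE g := by
    intro f g
    rw [lt_iff_le_not_ge, hleE, hleE, lt_iff_le_not_ge]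
  have hfg_max : ∀ f g : Sym2 V, f ≤ g → maxEnd f ≤ maxEnd g := by
    intro f g h
    rw [hleV]
    exact rank_le_of_le (eE g).isLt ((hleE f g).1 h)
  have hmax_lt : ∀ f g : Sym2 V, maxEnd f < maxEnd g → f < g := by
    intro f g h
    rw [hltE]
    exact rank_add_lt (eE f).isLt ((hltV _ _).1 h)
  set l := G.edgeFinset.sort (· ≤ ·) with hldef
  have hnd : l.Nodup := G.edgeFinset.sort_nodup _
  have hmeml : ∀ f, f ∈ l ↔ f ∈ G.edgeSet := by
    intro f
    rw [hldef, Finset.mem_sort, SimpleGraph.mem_edgeFinset]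
  have hsorted : l.Pairwise (· ≤ ·) := G.edgeFinset.pairwise_sort _
  have hpair : ∀ (a b : ℕ) (ha : a < l.length) (hb : b < l.length), a < b → l[a] ≤ l[b] :=
    fun a b ha hb hab => List.pairwise_iff_getElem.1 hsorted a b ha hb hab
  refine ⟨l, ⟨hnd, hmeml⟩, ?_⟩
  apply Finset.sup_le
  intro i _
  have hil : (i : ℕ) < l.length := i.isLt
  set e := l.get i with hedef
  have hegeti : e = l[(i : ℕ)] := rfl
  have heE : e ∈ G.edgeSet := (hmeml e).1 (hegeti ▸ List.getElem_mem hil)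
  set v0 := maxEnd e with hv0def
  set t0 := top v0 with ht0def
  have hSORT2 : e ∈ l.take ((i : ℕ)+1) := by
    rw [List.take_succ]
    apply List.mem_append_right
    rw [List.getElem?_eq_getElem hil]
    simp [hegeti]
  have hSORT1 : ∀ f ∈ l.take ((i : ℕ)+1), f ≤ e := by
    intro f hf
    obtain ⟨j, hj, hfj⟩ := List.getElem_of_mem hf
    have hjlen : j < l.length ∧ j < (i : ℕ) + 1 := by
      rw [List.length_take] at hj
      omega
    rw [List.getElem_take] at hfj
    rcases Nat.lt_or_ge j (i : ℕ) with h | h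
    · rw [← hfj, hegeti]
      exact hpair j i hjlen.1 hil h
    · have : j = (i : ℕ) := by omega
      subst this
      rw [← hfj, hegeti]
  have hSORT3 : ∀ f, f ∈ G.edgeSet → f < e → f ∈ l.take ((i : ℕ)+1) := by
    intro f hfE hflt
    obtain ⟨j, hj, hfj⟩ := List.getElem_of_mem ((hmeml f).2 hfE)
    have hji : j < (i : ℕ) + 1 := by
      by_contra hcon
      have := hpair (i : ℕ) j hil hj (by omega)
      rw [hfj, ← hegeti] at this
      exact absurd hflt (not_lt.2 this)
    rw [← hfj]
    have hjt : j < (l.take ((i : ℕ)+1)).length := by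
      rw [List.length_take]; omega
    rw [← List.getElem_take (h := hjt)]
    exact List.getElem_mem _
  set P : Set V := {z | z ≤ v0} with hPdef
  set H := SimpleGraph.fromEdgeSet {g : Sym2 V | g ∈ l.take ((i : ℕ)+1)} with hHdef
  have hH : ∀ a b : V, H.Adj a b → G.Adj a b ∧ a ∈ P ∧ b ∈ P := by
    intro a b hab
    rw [hHdef, SimpleGraph.fromEdgeSet_adj] at hab
    obtain ⟨hmem', hne⟩ := hab
    have hfl : s(a,b) ∈ l := List.mem_of_mem_take hmem'
    have hGadj : G.Adj a b := (G.mem_edgeSet).1 ((hmeml _).1 hfl)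
    have hmaxle : maxEnd s(a,b) ≤ v0 := hfg_max _ _ (hSORT1 _ hmem')
    exact ⟨hGadj, le_trans (hbound _ a (by simp)) hmaxle,
      le_trans (hbound _ b (by simp)) hmaxle⟩
  have hminP : ∀ z ∈ P, D.T.dist r (top v0) ≤ D.T.dist r (top z) := by
    intro z hz
    exact hrk_key z v0 ((hleV z v0).1 hz)
  have hreach : ∀ x y : V, x ∈ e → y ∈ e → H.Reachable x y := by
    intro x y hx hy
    by_cases hxy : x = y
    · subst hxy; rfl
    · have hexy : e = s(x,y) := (Sym2.mem_and_mem_iff hxy).1 ⟨hx, hy⟩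
      exact (SimpleGraph.Adj.reachable ((SimpleGraph.fromEdgeSet_adj _).2 ⟨by rw [← hexy]; exact hSORT2, hxy⟩))
  have hPreach : ∀ {x : V}, H.Reachable v0 x → x ∈ P := by
    have walkP : ∀ (a b : V), H.Walk a b → a ∈ P → b ∈ P := by
      intro a b w
      induction w with
      | nil => exact id
      | cons h p ih => exact fun _ => ih (hH _ _ h).2.2
    rintro x ⟨w⟩
    exact walkP v0 x w (le_refl v0)
  have hsub : {f : Sym2 V | f ∈ G.edgeSet ∧ f ∉ l.take ((i : ℕ)+1) ∧
      ∃ x ∈ f, ∃ y ∈ e, H.Reachable x y}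
      ⊆ ↑(((D.bag t0).biUnion (fun z => G.incidenceFinset z)) \ {e}) := by
    intro f hf
    obtain ⟨hfE, hfnot, x, hxf, y, hye, hreachxy⟩ := hf
    have hfne : f ≠ e := by rintro rfl; exact hfnot hSORT2
    have hv0x : H.Reachable v0 x := (hreach v0 y (hmem e) hye).trans hreachxy.symm
    obtain ⟨z', hfz⟩ := Sym2.mem_iff_exists.1 hxf
    have hGxz : G.Adj x z' := (G.mem_edgeSet).1 (by rw [← hfz]; exact hfE)
    have hend : x ∈ D.bag t0 ∨ z' ∈ D.bag t0 := by
      by_cases hz'P : z' ≤ v0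
      · by_cases hxv : x = v0
        · exact Or.inl (hxv ▸ htop1 v0)
        · by_cases hzv : z' = v0
          · exact Or.inr (hzv ▸ htop1 v0)
          · exfalso
            have hxP : x ∈ P := hPreach hv0x
            have hxlt : x < v0 := lt_of_le_of_ne hxP hxv
            have hzlt : z' < v0 := lt_of_le_of_ne hz'P hzv
            have hmf : maxEnd f < v0 := by
              have h5 : maxEnd f ∈ s(x, z') := by rw [← hfz]; exact hmem f
              rcases Sym2.mem_iff.1 h5 with h | h
              · rw [h]; exact hxlt
              · rw [h]; exact hzlt
            exact hfnot (hSORT3 f hfE (hmax_lt _ _ hmf))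
      · have hv0z : v0 ≤ z' := le_of_not_ge hz'P
        have hyk : D.T.dist r (top z') ≤ D.T.dist r (top v0) :=
          hrk_key v0 z' ((hleV v0 z').1 hv0z)
        exact Or.inr (dir2_boundary hT D.bag r top D.bag_conn D.bag_edge htop1
          (fun v t ht => htop2 v t ht) P v0 hminP H hH hv0x hGxz hyk)
    rw [Finset.mem_coe, Finset.mem_sdiff, Finset.mem_biUnion]
    constructor
    · rcases hend with h | h
      · exact ⟨x, h, by rw [SimpleGraph.mem_incidenceFinset]; exact ⟨hfE, by rw [hfz]; exact Sym2.mem_mk_left x z'⟩⟩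
      · exact ⟨z', h, by rw [SimpleGraph.mem_incidenceFinset]; exact ⟨hfE, by rw [hfz]; exact Sym2.mem_mk_right x z'⟩⟩
    · simpa using hfne
  have hein : e ∈ (D.bag t0).biUnion (fun z => G.incidenceFinset z) := by
    rw [Finset.mem_biUnion]
    exact ⟨v0, htop1 v0, by rw [SimpleGraph.mem_incidenceFinset]; exact ⟨heE, hmem e⟩⟩
  have hcard : (((D.bag t0).biUnion (fun z => G.incidenceFinset z)) \ {e}).card ≤ d * c - 1 := by
    rw [Finset.card_sdiff_of_subset (Finset.singleton_subset_iff.2 hein)]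
    have h1 : ((D.bag t0).biUnion (fun z => G.incidenceFinset z)).card ≤ d * c := by
      calc ((D.bag t0).biUnion (fun z => G.incidenceFinset z)).card
          ≤ ∑ z ∈ D.bag t0, (G.incidenceFinset z).card := Finset.card_biUnion_le
        _ ≤ (D.bag t0).card • d := Finset.sum_le_card_nsmul _ _ d (by
            intro z _
            rw [SimpleGraph.card_incidenceFinset_eq_degree]
            exact hdeg z)
        _ = (D.bag t0).card * d := by rw [smul_eq_mul]
        _ ≤ c * d := Nat.mul_le_mul_right d (hc t0)
        _ = d * c := Nat.mul_comm c d
    simp only [Finset.card_singleton]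
    omega
  calc mergedDeg G (l.take ((i : ℕ)+1)) (l.get i)
      ≤ (((D.bag t0).biUnion (fun z => G.incidenceFinset z)) \ {e}).card := by
        rw [mergedDeg, ← Set.ncard_coe_finset]
        exact Set.ncard_le_ncard hsub (Finset.finite_toSet _)
    _ ≤ d * c - 1 := hcard


lemma walk_pres {α : Type} {Gr : SimpleGraph α} (A : Set α)
    (h : ∀ x y : α, Gr.Adj x y → (x ∈ A ↔ y ∈ A)) {a b : α} (w : Gr.Walk a b)
    (ha : a ∈ A) : b ∈ A := by
  induction w with
  | nil => exact ha
  | cons hadj p ih => exact ih ((h _ _ hadj).1 ha)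

lemma parent_iterate_ge (par : ℕ → ℕ) (hge : ∀ x, x ≤ par x) (x k : ℕ) :
    x ≤ par^[k] x := by
  induction k with
  | zero => simp
  | succ k ih => rw [Function.iterate_succ_apply']; exact le_trans ih (hge _)

lemma tree_of_parent {N : ℕ} (par : ℕ → ℕ)
    (hpar : ∀ x, x < N → x < par x ∧ par x ≤ N)
    (hfix : ∀ x, N ≤ x → par x = x) :
    (SimpleGraph.fromRel (fun a b : Fin (N+1) => par ↑a = ↑b ∨ par ↑b = ↑a)).IsTree := by
  set T' := SimpleGraph.fromRel (fun a b : Fin (N+1) => par ↑a = ↑b ∨ par ↑b = ↑a) with hT'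
  have hge : ∀ x, x ≤ par x := by
    intro x
    rcases Nat.lt_or_ge x N with h | h
    · exact (hpar x h).1.le
    · rw [hfix x h]
  have hadj_iff : ∀ a b : Fin (N+1), T'.Adj a b ↔ a ≠ b ∧ (par ↑a = ↑b ∨ par ↑b = ↑a) := by
    intro a b; rw [hT', SimpleGraph.fromRel_adj]
    tauto
  have hlast : ∀ x : Fin (N+1), T'.Reachable x ⟨N, Nat.lt_succ_self N⟩ := by
    have key : ∀ n (x : Fin (N+1)), N - ↑x ≤ n → T'.Reachable x ⟨N, Nat.lt_succ_self N⟩ := by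
      intro n
      induction n with
      | zero =>
        intro x hx
        have : (x : ℕ) = N := by have := x.isLt; omega
        have : x = ⟨N, Nat.lt_succ_self N⟩ := Fin.ext this
        rw [this]
      | succ n ih =>
        intro x hx
        rcases Nat.lt_or_ge (x : ℕ) N with h | h
        · have hparx := hpar _ h
          set y : Fin (N+1) := ⟨par ↑x, by omega⟩ with hy
          have hady : T'.Adj x y := by
            rw [hadj_iff]
            exact ⟨Fin.ne_of_val_ne (by simp [hy]; omega), Or.inl rfl⟩
          exact hady.reachable.trans (ih y (by simp [hy]; omega))
        · have : (x : ℕ) = N := by have := x.isLt; omega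
          have : x = ⟨N, Nat.lt_succ_self N⟩ := Fin.ext this
          rw [this]
    intro x
    exact key (N - ↑x) x le_rfl
  have hconn : T'.Connected := by
    rw [SimpleGraph.connected_iff]
    exact ⟨fun x y => (hlast x).trans (hlast y).symm, ⟨⟨N, Nat.lt_succ_self N⟩⟩⟩
  have hacyc : T'.IsAcyclic := by
    rw [SimpleGraph.isAcyclic_iff_forall_adj_isBridge]
    have key : ∀ v w : Fin (N+1), T'.Adj v w → par ↑v = ↑w → T'.IsBridge s(v, w) := by
      intro v w hadj hpw
      rw [SimpleGraph.isBridge_iff]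
      rintro ⟨wk⟩
      have hvN : (v : ℕ) < N := by
        rcases Nat.lt_or_ge (v : ℕ) N with h | h
        · exact h
        · exfalso
          have := hfix _ h
          rw [hpw] at this
          exact (hadj_iff v w).1 hadj |>.1 (Fin.ext this.symm)
      set A : Set (Fin (N+1)) := {z | ∃ k, par^[k] ↑z = ↑v} with hA
      have hvA : v ∈ A := ⟨0, rfl⟩
      have hwA : w ∉ A := by
        rintro ⟨k, hk⟩
        have h1 : (w : ℕ) ≤ par^[k] ↑w := parent_iterate_ge par hge _ _
        have h2 : (v : ℕ) < (w : ℕ) := by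
          have := (hpar _ hvN).1
          omega
        omega
      have hpres : ∀ x y : Fin (N+1), (T' \ SimpleGraph.fromEdgeSet {s(v, w)}).Adj x y →
          (x ∈ A ↔ y ∈ A) := by
        have claim : ∀ x y : Fin (N+1), s(x, y) ≠ s(v, w) → par ↑x = ↑y →
            (x ∈ A ↔ y ∈ A) := by
          intro x y hne hxy
          constructor
          · rintro ⟨k, hk⟩
            cases k with
            | zero =>
              exfalso
              have hxv : x = v := Fin.ext hk
              have hyw : y = w := Fin.ext (by rw [← hxy, hxv, hpw])
              exact hne (by rw [hxv, hyw])
            | succ k' =>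
              rw [Function.iterate_succ_apply, hxy] at hk
              exact ⟨k', hk⟩
          · rintro ⟨k, hk⟩
            exact ⟨k + 1, by rw [Function.iterate_succ_apply, hxy]; exact hk⟩
        intro x y hxy
        rw [SimpleGraph.sdiff_adj] at hxy
        obtain ⟨hT'xy, hnotE⟩ := hxy
        have hne : s(x, y) ≠ s(v, w) := by
          intro hcon
          exact hnotE ((SimpleGraph.fromEdgeSet_adj _).2
            ⟨by rw [hcon]; rfl, ((hadj_iff x y).1 hT'xy).1⟩)
        rcases ((hadj_iff x y).1 hT'xy).2 with h | h
        · exact claim x y hne h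
        · exact (claim y x (by rw [Sym2.eq_swap]; exact hne) h).symm
      obtain ⟨wk'⟩ := Nonempty.intro wk
      exact hwA (walk_pres A hpres wk hvA)
    intro v w hadj
    rcases ((hadj_iff v w).1 hadj).2 with h | h
    · exact key v w hadj h
    · rw [Sym2.eq_swap]
      exact key w v hadj.symm h
  exact ⟨hconn, hacyc⟩

lemma dir1_final {V : Type} [Fintype V] [DecidableEq V] (G : SimpleGraph V) [DecidableRel G.Adj]
    (hiso : ∀ v : V, ∃ u : V, G.Adj u v)
    (l : List (Sym2 V)) (hord : IsEdgeOrder G l) (k : ℕ)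
    (hk : ∀ i : Fin l.length, mergedDeg G (l.take (i+1)) (l.get i) ≤ k) :
    ∃ D : TreeDecomp G, ∀ t, (D.bag t).card ≤ 2 * k + 2 := by
  classical
  obtain ⟨hnd, hmem⟩ := hord
  set m := l.length with hm
  set Hl : ℕ → SimpleGraph V := fun j => SimpleGraph.fromEdgeSet {g | g ∈ l.take (j+1)}
    with hHl
  set Cset : ℕ → Set V :=
    fun j => {x | ∃ (h : j < m), ∃ y ∈ l.get ⟨j, h⟩, (Hl j).Reachable x y} with hCset
  -- list helpers
  have take_mono : ∀ {j j' : ℕ}, j ≤ j' → ∀ f ∈ l.take (j+1), f ∈ l.take (j'+1) := by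
    intro j j' hjj f hf
    obtain ⟨j0, hj0, hfj0⟩ := List.getElem_of_mem hf
    rw [List.length_take] at hj0
    rw [List.getElem_take] at hfj0
    have hj0' : j0 < (l.take (j'+1)).length := by rw [List.length_take]; omega
    rw [← hfj0, ← List.getElem_take (h := hj0')]
    exact List.getElem_mem _
  have Rmono : ∀ {j j' : ℕ}, j ≤ j' → ∀ {x y : V},
      (Hl j).Reachable x y → (Hl j').Reachable x y := by
    intro j j' hjj x y hr
    apply SimpleGraph.Reachable.mono _ hr
    apply SimpleGraph.fromEdgeSet_mono
    intro f hf
    exact take_mono hjj f hf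
  have get_mem_take : ∀ (j : ℕ) (h : j < m), l.get ⟨j, h⟩ ∈ l.take (j+1) := by
    intro j h
    rw [List.take_succ]
    apply List.mem_append_right
    rw [List.getElem?_eq_getElem h]
    simp
  have get_edge : ∀ (j : ℕ) (h : j < m), l.get ⟨j, h⟩ ∈ G.edgeSet :=
    fun j h => (hmem _).1 (List.getElem_mem h)
  have endpoints_reach : ∀ (j : ℕ) (h : j < m) (x y : V),
      x ∈ l.get ⟨j, h⟩ → y ∈ l.get ⟨j, h⟩ → (Hl j).Reachable x y := by
    intro j h x y hx hy
    by_cases hxy : x = y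
    · subst hxy; rfl
    · have hexy : l.get ⟨j, h⟩ = s(x, y) := (Sym2.mem_and_mem_iff hxy).1 ⟨hx, hy⟩
      exact ((SimpleGraph.fromEdgeSet_adj _).2
        ⟨by rw [← hexy]; exact get_mem_take j h, hxy⟩).reachable
  have endpoint_in_C : ∀ (j : ℕ) (h : j < m) (y : V), y ∈ l.get ⟨j, h⟩ → y ∈ Cset j :=
    fun j h y hy => ⟨h, y, hy, SimpleGraph.Reachable.refl y⟩
  have C_forall : ∀ (j : ℕ) (h : j < m) (x : V), x ∈ Cset j →
      ∀ y ∈ l.get ⟨j, h⟩, (Hl j).Reachable x y := by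
    rintro j h x ⟨h', y', hy', hr⟩ y hy
    exact hr.trans (endpoints_reach j h y' y hy' hy)
  have C_lt : ∀ {j : ℕ} {x : V}, x ∈ Cset j → j < m := fun hx => hx.1
  have C_subset : ∀ {j j' : ℕ} {z : V}, j ≤ j' → z ∈ Cset j → z ∈ Cset j' →
      ∀ x ∈ Cset j, x ∈ Cset j' := by
    rintro j j' z hjj hzj ⟨hj', y', hy', hrz⟩ x ⟨hj, y, hy, hrx⟩
    refine ⟨hj', y', hy', ?_⟩
    have h1 : (Hl j).Reachable x z := hrx.trans ((C_forall j hj z hzj y hy).symm)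
    exact (Rmono hjj h1).trans hrz
  have pick_ex : ∀ e : Sym2 V, ∃ u : V, u ∈ e := by
    intro e
    induction e with
    | _ a b => exact ⟨a, by simp⟩
  choose pick hpick using pick_ex
  set nxtS : ℕ → Set ℕ :=
    fun j => {t | j < t ∧ ∃ h : j < m, pick (l.get ⟨j, h⟩) ∈ Cset t} with hnxtS
  set nxt : ℕ → ℕ := fun j => if h : (nxtS j).Nonempty then sInf (nxtS j) else m with hnxt
  have nxt_mem : ∀ j, (nxtS j).Nonempty → nxt j ∈ nxtS j := by
    intro j hne
    rw [hnxt]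
    simp only [dif_pos hne]
    exact Nat.sInf_mem hne
  have nxt_gt : ∀ j, j < m → j < nxt j := by
    intro j hj
    by_cases hne : (nxtS j).Nonempty
    · exact (nxt_mem j hne).1
    · rw [hnxt]; simp only [dif_neg hne]; exact hj
  have nxt_le : ∀ j, nxt j ≤ m := by
    intro j
    by_cases hne : (nxtS j).Nonempty
    · have h3 := nxt_mem j hne
      simp only [hnxtS, Set.mem_setOf_eq] at h3
      exact (C_lt h3.2.2).le
    · rw [hnxt]; simp only [dif_neg hne]
      exact le_rfl
  have K4 : ∀ (j j' : ℕ) (v : V), j < j' → v ∈ Cset j → v ∈ Cset j' →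
      (nxtS j).Nonempty ∧ nxt j ≤ j' ∧ v ∈ Cset (nxt j) := by
    intro j j' v hjj hvj hvj'
    have hj : j < m := C_lt hvj
    have hj' : j' < m := C_lt hvj'
    have hu_j : pick (l.get ⟨j, hj⟩) ∈ Cset j := endpoint_in_C j hj _ (hpick _)
    have hu_j' : pick (l.get ⟨j, hj⟩) ∈ Cset j' := by
      obtain ⟨hj'2, y, hy, hr⟩ := hvj'
      have h1 : (Hl j).Reachable v (pick (l.get ⟨j, hj⟩)) :=
        C_forall j hj v hvj _ (hpick _)
      exact ⟨hj', y, hy, (Rmono hjj.le h1).symm.trans hr⟩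
    have hne : (nxtS j).Nonempty := ⟨j', hjj, hj, hu_j'⟩
    have hle : nxt j ≤ j' := by
      rw [hnxt]; simp only [dif_pos hne]
      exact Nat.sInf_le ⟨hjj, hj, hu_j'⟩
    obtain ⟨hgt, hj2, hu_nxt⟩ := nxt_mem j hne
    exact ⟨hne, hle, C_subset hgt.le hu_j hu_nxt v hvj⟩
  set stp : ℕ → ℕ → Prop := fun a b => (nxtS a).Nonempty ∧ b = nxt a with hstp
  have K6 : ∀ (v : V) (j j' : ℕ), Relation.ReflTransGen stp j j' →
      v ∈ Cset j → v ∈ Cset j' := by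
    intro v j j' hchain
    induction hchain with
    | refl => exact id
    | tail hch hstep ih =>
      rename_i b c
      intro hvj
      obtain ⟨hne, rfl⟩ := hstep
      obtain ⟨hgt, hb, hu⟩ := nxt_mem b hne
      exact C_subset hgt.le (endpoint_in_C b hb _ (hpick _)) hu v (ih hvj)
  have K5 : ∀ (v : V) (dlt j j' : ℕ), j' - j ≤ dlt → j ≤ j' → v ∈ Cset j → v ∈ Cset j' →
      Relation.ReflTransGen stp j j' := by
    intro v dlt
    induction dlt with
    | zero =>
      intro j j' h1 h2 _ _
      have : j = j' := by omega
      rw [this]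
    | succ dlt ih =>
      intro j j' h1 h2 hvj hvj'
      rcases Nat.eq_or_lt_of_le h2 with heq | hlt
      · rw [heq]
      · obtain ⟨hne, hle, hvnxt⟩ := K4 j j' v hlt hvj hvj'
        have hgt := nxt_gt j (C_lt hvj)
        exact Relation.ReflTransGen.head ⟨hne, rfl⟩
          (ih (nxt j) j' (by omega) hle hvnxt hvj')
  -- the tree
  set parN : ℕ → ℕ := fun x => if x < m then nxt x else x with hparN
  have hpar1 : ∀ x, x < m → x < parN x ∧ parN x ≤ m := by
    intro x hx
    rw [hparN]; simp only [if_pos hx]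
    exact ⟨nxt_gt x hx, nxt_le x⟩
  have hpar2 : ∀ x, m ≤ x → parN x = x := by
    intro x hx
    rw [hparN]; simp only [if_neg (by omega : ¬ x < m)]
  set T' := SimpleGraph.fromRel (fun a b : Fin (m+1) => parN ↑a = ↑b ∨ parN ↑b = ↑a)
    with hT'
  have hTree : T'.IsTree := tree_of_parent parN hpar1 hpar2
  have hadj_iff : ∀ a b : Fin (m+1), T'.Adj a b ↔ a ≠ b ∧ (parN ↑a = ↑b ∨ parN ↑b = ↑a) := by
    intro a b; rw [hT', SimpleGraph.fromRel_adj]; tauto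
  -- the bags
  set bagF : Fin (m+1) → Finset V := fun x =>
    if h : (x : ℕ) < m then
      Finset.univ.filter (fun v => v ∈ l.get ⟨(x : ℕ), h⟩ ∨
        (v ∈ Cset ↑x ∧ ∃ f ∈ G.edgeSet, f ∉ l.take (↑x+1) ∧ v ∈ f))
    else ∅ with hbagF
  have mem_bag : ∀ (v : V) (x : Fin (m+1)), v ∈ bagF x ↔ ∃ h : (x : ℕ) < m,
      (v ∈ l.get ⟨(x : ℕ), h⟩ ∨
        (v ∈ Cset ↑x ∧ ∃ f ∈ G.edgeSet, f ∉ l.take (↑x+1) ∧ v ∈ f)) := by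
    intro v x
    rw [hbagF]
    by_cases h : (x : ℕ) < m
    · simp only [dif_pos h, Finset.mem_filter, Finset.mem_univ, true_and]
      exact ⟨fun hh => ⟨h, hh⟩, fun ⟨_, hh⟩ => hh⟩
    · simp only [dif_neg h, Finset.notMem_empty, false_iff]
      rintro ⟨hc, -⟩
      exact h hc
  have mem_bagN : ∀ (v : V) (c : ℕ) (hc : c < m + 1), v ∈ bagF ⟨c, hc⟩ ↔
      ∃ h : c < m, (v ∈ l.get ⟨c, h⟩ ∨
        (v ∈ Cset c ∧ ∃ f ∈ G.edgeSet, f ∉ l.take (c+1) ∧ v ∈ f)) :=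
    fun v c hc => mem_bag v ⟨c, hc⟩
  -- no-dup take fact
  have nodup_take : ∀ (j t : ℕ) (hj : j < m), t ≤ j → l.get ⟨j, hj⟩ ∉ l.take t := by
    intro j t hj ht hin
    obtain ⟨j0, hj0, hfj0⟩ := List.getElem_of_mem hin
    rw [List.length_take] at hj0
    rw [List.getElem_take] at hfj0
    have : j0 = j := (List.Nodup.getElem_inj_iff hnd).1 hfj0
    omega
  -- cover and edge
  have hcover : ∀ v : V, ∃ t : Fin (m+1), v ∈ bagF t := by
    intro v
    obtain ⟨u, hu⟩ := hiso v
    have he : s(u, v) ∈ l := (hmem _).2 (G.mem_edgeSet.2 hu)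
    obtain ⟨j, hj, hfj⟩ := List.getElem_of_mem he
    refine ⟨⟨j, by omega⟩, (mem_bag v _).2 ⟨hj, Or.inl ?_⟩⟩
    show v ∈ l.get ⟨j, hj⟩
    rw [List.get_eq_getElem, hfj]
    simp
  have hedge : ∀ u v : V, G.Adj u v → ∃ t : Fin (m+1), u ∈ bagF t ∧ v ∈ bagF t := by
    intro u v huv
    have he : s(u, v) ∈ l := (hmem _).2 (G.mem_edgeSet.2 huv)
    obtain ⟨j, hj, hfj⟩ := List.getElem_of_mem he
    refine ⟨⟨j, by omega⟩, (mem_bag u _).2 ⟨hj, Or.inl ?_⟩, (mem_bag v _).2 ⟨hj, Or.inl ?_⟩⟩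
    · show u ∈ l.get ⟨j, hj⟩
      rw [List.get_eq_getElem, hfj]; simp
    · show v ∈ l.get ⟨j, hj⟩
      rw [List.get_eq_getElem, hfj]; simp
  -- connectivity of bags
  have hconnbag : ∀ v : V, (T'.induce {t : Fin (m+1) | v ∈ bagF t}).Connected := by
    intro v
    set S : Set (Fin (m+1)) := {t : Fin (m+1) | v ∈ bagF t} with hS
    set F0 : Finset ℕ := (Finset.range m).filter
      (fun j => ∃ h : j < m, v ∈ l.get ⟨j, h⟩) with hF0
    have hF0ne : F0.Nonempty := by
      obtain ⟨u, hu⟩ := hiso v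
      have he : s(u, v) ∈ l := (hmem _).2 (G.mem_edgeSet.2 hu)
      obtain ⟨j, hj, hfj⟩ := List.getElem_of_mem he
      exact ⟨j, Finset.mem_filter.2 ⟨Finset.mem_range.2 hj, hj, by
        show v ∈ l.get ⟨j, hj⟩
        rw [List.get_eq_getElem, hfj]; simp⟩⟩
    set i0 := F0.min' hF0ne with hi0def
    set istar := F0.max' hF0ne with histardef
    have hmemF0 : ∀ j ∈ F0, ∃ h : j < m, v ∈ l.get ⟨j, h⟩ :=
      fun j hj => (Finset.mem_filter.1 hj).2
    have hi0F0 := F0.min'_mem hF0ne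
    obtain ⟨hi0m, hvi0⟩ := hmemF0 _ hi0F0
    have B2 : ∀ (j : ℕ), v ∈ Cset j → i0 ≤ j := by
      rintro j ⟨hj, y, hy, hr⟩
      obtain ⟨w⟩ := hr
      have : ∃ j' ≤ j, ∃ h' : j' < m, v ∈ l.get ⟨j', h'⟩ := by
        cases w with
        | nil => exact ⟨j, le_rfl, hj, hy⟩
        | cons hadj p =>
          rename_i z
          have h1 : s(v, z) ∈ l.take (j+1) := ((SimpleGraph.fromEdgeSet_adj _).1 hadj).1
          obtain ⟨j0, hj0, hfj0⟩ := List.getElem_of_mem h1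
          rw [List.length_take] at hj0
          rw [List.getElem_take] at hfj0
          refine ⟨j0, by omega, by omega, ?_⟩
          show v ∈ l.get ⟨j0, by omega⟩
          rw [List.get_eq_getElem, hfj0]
          simp
      obtain ⟨j', hj'le, hj'm, hvj'⟩ := this
      have : j' ∈ F0 := Finset.mem_filter.2 ⟨Finset.mem_range.2 hj'm, hj'm, hvj'⟩
      exact le_trans (F0.min'_le _ this) hj'le
    have hvCi0 : v ∈ Cset i0 := endpoint_in_C i0 hi0m v hvi0
    have hSne : (⟨i0, by omega⟩ : Fin (m+1)) ∈ S := by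
      rw [hS, Set.mem_setOf_eq, mem_bag]
      exact ⟨hi0m, Or.inl hvi0⟩
    have B3 : ∀ x : Fin (m+1), x ∈ S → ∃ h : (x : ℕ) < m, v ∈ Cset ↑x ∧ (x : ℕ) ≤ istar := by
      intro x hx
      rw [hS, Set.mem_setOf_eq, mem_bag] at hx
      obtain ⟨h, hcase⟩ := hx
      refine ⟨h, ?_, ?_⟩
      · rcases hcase with h1 | h1
        · exact endpoint_in_C _ h v h1
        · exact h1.1
      · rcases hcase with h1 | h1
        · exact F0.le_max' _ (Finset.mem_filter.2 ⟨Finset.mem_range.2 h, h, h1⟩)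
        · obtain ⟨-, f, hfE, hfnt, hvf⟩ := h1
          obtain ⟨jf, hjf, hfjf⟩ := List.getElem_of_mem ((hmem f).2 hfE)
          have hjfx : (x : ℕ) + 1 ≤ jf := by
            by_contra hcon
            apply hfnt
            have hjt : jf < (l.take ((x : ℕ)+1)).length := by
              rw [List.length_take]; omega
            rw [← hfjf, ← List.getElem_take (h := hjt)]
            exact List.getElem_mem _
          have : jf ∈ F0 := Finset.mem_filter.2 ⟨Finset.mem_range.2 hjf, hjf, by
            show v ∈ l.get ⟨jf, hjf⟩
            rw [List.get_eq_getElem, hfjf]; exact hvf⟩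
          have := F0.le_max' _ this
          omega
    -- main chain climb
    have B6 : ∀ (c : ℕ), Relation.ReflTransGen stp i0 c →
        ∀ (hcS : ∃ hc : c < m+1, (⟨c, hc⟩ : Fin (m+1)) ∈ S),
        (T'.induce S).Reachable ⟨⟨i0, by omega⟩, hSne⟩
          ⟨⟨c, hcS.choose⟩, hcS.choose_spec⟩ := by
      intro c hchain
      induction hchain with
      | refl =>
        intro hcS
        rfl
      | tail hch hstep ih =>
        rename_i b c
        intro hcS
        obtain ⟨hne, rfl⟩ := hstep
        have hcm1 := hcS.choose
        have hSc : (⟨nxt b, hcm1⟩ : Fin (m+1)) ∈ S := hcS.choose_spec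
        rw [hS, Set.mem_setOf_eq, mem_bagN] at hSc
        obtain ⟨t0, -, hbm, -⟩ := hne
        have hbc : b < nxt b := nxt_gt b hbm
        have hcm : nxt b < m := hSc.choose
        have hvb : v ∈ Cset b := K6 v i0 b hch hvCi0
        have hrem : ∃ f ∈ G.edgeSet, f ∉ l.take (b+1) ∧ v ∈ f := by
          obtain ⟨hc2, hcase⟩ := hSc
          rcases hcase with h1 | h1
          · exact ⟨l.get ⟨nxt b, hc2⟩, get_edge _ hc2,
              nodup_take _ _ hc2 (by omega), h1⟩
          · obtain ⟨-, f, hfE, hfnt, hvf⟩ := h1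
            refine ⟨f, hfE, fun hcon => hfnt (take_mono (by omega) f hcon), hvf⟩
        have hbS : (⟨b, by omega⟩ : Fin (m+1)) ∈ S := by
          rw [hS, Set.mem_setOf_eq, mem_bagN]
          exact ⟨hbm, Or.inr ⟨hvb, hrem⟩⟩
        have hreachb := ih ⟨by omega, hbS⟩
        have hadj : T'.Adj ⟨b, by omega⟩ ⟨nxt b, by omega⟩ := by
          have h8 : parN b = nxt b := by rw [hparN]; simp only [if_pos hbm]
          refine (hadj_iff _ _).2 ⟨?_, Or.inl h8⟩
          intro hcon
          have h9 : b = nxt b := congrArg Fin.val hcon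
          omega
        have hadj' : (T'.induce S).Adj ⟨⟨b, by omega⟩, hbS⟩
            ⟨⟨nxt b, by omega⟩, hcS.choose_spec⟩ := hadj
        exact hreachb.trans hadj'.reachable
    rw [SimpleGraph.connected_iff]
    constructor
    · rintro ⟨x, hx⟩ ⟨y, hy⟩
      have reach_i0 : ∀ (z : Fin (m+1)) (hz : z ∈ S),
          (T'.induce S).Reachable ⟨⟨i0, by omega⟩, hSne⟩ ⟨z, hz⟩ := by
        intro z hz
        obtain ⟨hzm, hvz, -⟩ := B3 z hz
        have hchain : Relation.ReflTransGen stp i0 ↑z :=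
          K5 v (↑z - i0) i0 ↑z le_rfl (B2 _ hvz) hvCi0 hvz
        have := B6 ↑z hchain ⟨by omega, by simpa using hz⟩
        convert this using 2 <;> exact Fin.ext rfl
      exact ((reach_i0 x hx).symm.trans (reach_i0 y hy)).mono le_rfl
    · exact ⟨⟨_, hSne⟩⟩
  -- size of bags
  have hsize : ∀ x : Fin (m+1), (bagF x).card ≤ 2 * k + 2 := by
    intro x
    by_cases h : (x : ℕ) < m
    · letI := (Set.toFinite {f : Sym2 V | f ∈ G.edgeSet ∧ f ∉ l.take ((x : ℕ)+1) ∧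
        ∃ z ∈ f, ∃ y ∈ l.get ⟨(x : ℕ), h⟩, (Hl ↑x).Reachable z y}).fintype
      set DF : Finset (Sym2 V) := {f : Sym2 V | f ∈ G.edgeSet ∧ f ∉ l.take ((x : ℕ)+1) ∧
        ∃ z ∈ f, ∃ y ∈ l.get ⟨(x : ℕ), h⟩, (Hl ↑x).Reachable z y}.toFinset with hDFdef
      have hDFcard : DF.card ≤ k := by
        have := hk ⟨(x : ℕ), h⟩
        rw [mergedDeg] at this
        rw [hDFdef]
        rw [← Set.ncard_eq_toFinset_card']
        exact this
      have hsub : bagF x ⊆ (Finset.univ.filter (· ∈ l.get ⟨(x : ℕ), h⟩)) ∪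
          DF.biUnion (fun f => Finset.univ.filter (· ∈ f)) := by
        intro v hv
        rw [mem_bag] at hv
        obtain ⟨h', hcase⟩ := hv
        rcases hcase with h1 | h1
        · exact Finset.mem_union_left _ (Finset.mem_filter.2 ⟨Finset.mem_univ _, h1⟩)
        · obtain ⟨⟨hh9, y, hy, hr⟩, f, hfE, hfnt, hvf⟩ := h1
          apply Finset.mem_union_right
          rw [Finset.mem_biUnion]
          refine ⟨f, ?_, Finset.mem_filter.2 ⟨Finset.mem_univ _, hvf⟩⟩
          rw [hDFdef, Set.mem_toFinset]
          exact ⟨hfE, hfnt, v, hvf, y, hy, hr⟩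
      have hcard2 : ∀ e : Sym2 V, (Finset.univ.filter (· ∈ e)).card ≤ 2 := by
        intro e
        induction e with
        | _ a b =>
          have : (Finset.univ.filter (· ∈ s(a, b))) ⊆ {a, b} := by
            intro z hz
            have := (Finset.mem_filter.1 hz).2
            rw [Sym2.mem_iff] at this
            simpa using this
          calc (Finset.univ.filter (· ∈ s(a, b))).card ≤ ({a, b} : Finset V).card :=
                Finset.card_le_card this
            _ ≤ 2 := Finset.card_insert_le _ _ |>.trans (by simp)
      calc (bagF x).card
          ≤ ((Finset.univ.filter (· ∈ l.get ⟨(x : ℕ), h⟩)) ∪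
            DF.biUnion (fun f => Finset.univ.filter (· ∈ f))).card := Finset.card_le_card hsub
        _ ≤ (Finset.univ.filter (· ∈ l.get ⟨(x : ℕ), h⟩)).card +
            (DF.biUnion (fun f => Finset.univ.filter (· ∈ f))).card := Finset.card_union_le _ _
        _ ≤ 2 + (DF.biUnion (fun f => Finset.univ.filter (· ∈ f))).card := by
            have := hcard2 (l.get ⟨(x : ℕ), h⟩); omega
        _ ≤ 2 + ∑ f ∈ DF, (Finset.univ.filter (· ∈ f)).card := by
            have := Finset.card_biUnion_le (s := DF)
              (t := fun f => Finset.univ.filter (· ∈ f))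
            omega
        _ ≤ 2 + DF.card • 2 := by
            have := Finset.sum_le_card_nsmul DF (fun f => (Finset.univ.filter (· ∈ f)).card) 2
              (fun f _ => hcard2 f)
            omega
        _ ≤ 2 * k + 2 := by
            rw [smul_eq_mul]
            omega
    · rw [hbagF]
      simp only [dif_neg h]
      simp
  exact ⟨⟨Fin (m+1), inferInstance, T', hTree, bagF, hcover, hedge, hconnbag⟩, hsize⟩

noncomputable def trivialDecomp {V : Type} [Fintype V] (G : SimpleGraph V) : TreeDecomp G where
  ι := Unit
  instFin := inferInstance
  T := ⊥
  isTree := by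
    constructor
    · constructor
      · intro a b
        rw [Subsingleton.elim a b]
    · intro v c hc
      cases c with
      | nil => simp at hc
      | cons h p => exact h.elim
  bag := fun _ => Finset.univ
  bag_cover := fun v => ⟨(), Finset.mem_univ v⟩
  bag_edge := fun u v _ => ⟨(), Finset.mem_univ u, Finset.mem_univ v⟩
  bag_conn := by
    intro v
    rw [SimpleGraph.connected_iff]
    constructor
    · intro a b
      rw [Subsingleton.elim a b]
    · exact ⟨⟨(), by simp⟩⟩


/-- Let `d ≥ 1` and let `G` be a finite simple graph with at least one
edge, no isolated vertices, and maximum degree `Δ(G) ≤ d`.  Then `tw(G) ≤ 2·cc(G) + 1` and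
`cc(G) ≤ d·(tw(G) + 1) - 1`. -/
theorem treewidth_cc_bounds
    {V : Type} [Fintype V] [DecidableEq V] (G : SimpleGraph V) [DecidableRel G.Adj]
    (d : ℕ) (hd : 1 ≤ d) (hE : G.edgeFinset.Nonempty)
    (hiso : ∀ v : V, ∃ u : V, G.Adj u v) (hΔ : G.maxDegree ≤ d) :
    treewidth G ≤ 2 * cc G + 1 ∧ cc G ≤ d * (treewidth G + 1) - 1 := by
  classical
  have hccset : {n : ℕ | ∃ l : List (Sym2 V), IsEdgeOrder G l ∧ listComplexity G l = n}.Nonempty := by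
    refine ⟨listComplexity G G.edgeFinset.toList, G.edgeFinset.toList,
      ⟨Finset.nodup_toList _, ?_⟩, rfl⟩
    intro e
    rw [Finset.mem_toList, SimpleGraph.mem_edgeFinset]
  obtain ⟨l, hlord, hlcomp⟩ := Nat.sInf_mem hccset
  have htwset : {n : ℕ | ∃ D : TreeDecomp G, D.width = n}.Nonempty :=
    ⟨(trivialDecomp G).width, trivialDecomp G, rfl⟩
  obtain ⟨D, hD⟩ := Nat.sInf_mem htwset
  constructor
  · -- treewidth ≤ 2 cc + 1
    obtain ⟨D1, hD1⟩ := dir1_final G hiso l hlord (cc G) (fun i => by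
      have h1 : mergedDeg G (l.take ((i : ℕ)+1)) (l.get i) ≤ listComplexity G l :=
        Finset.le_sup (f := fun i : Fin l.length => mergedDeg G (l.take ((i : ℕ)+1)) (l.get i))
          (Finset.mem_univ i)
      rw [hlcomp] at h1
      exact h1)
    have hw : D1.width ≤ 2 * cc G + 1 := by
      rw [TreeDecomp.width]
      have hsup : (@Finset.univ D1.ι D1.instFin).sup (fun t => (D1.bag t).card)
          ≤ 2 * cc G + 2 := Finset.sup_le (fun t _ => hD1 t)
      omega
    exact le_trans (Nat.sInf_le ⟨D1, rfl⟩) hw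
  · -- cc ≤ d (tw+1) - 1
    have hbags : ∀ t, (D.bag t).card ≤ treewidth G + 1 := by
      intro t
      have h1 : (D.bag t).card ≤ (@Finset.univ D.ι D.instFin).sup (fun t => (D.bag t).card) :=
        Finset.le_sup (s := @Finset.univ D.ι D.instFin) (f := fun t => (D.bag t).card)
          (@Finset.mem_univ _ D.instFin t)
      have h2 : D.width = (@Finset.univ D.ι D.instFin).sup (fun t => (D.bag t).card) - 1 := rfl
      have h3 : D.width = treewidth G := hD
      omega
    obtain ⟨l2, hord2, hcomp2⟩ := dir2_final G d (treewidth G + 1)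
      (fun v => le_trans (G.degree_le_maxDegree v) hΔ) D hbags
    exact le_trans (Nat.sInf_le ⟨l2, hord2, rfl⟩) hcomp2
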